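/- Let n ≥ 3 be odd and let G = ⟨α, τ : α^n = τ^2 = 1, τα = α^{-1}τ⟩ be the dihedral group of order 2n. Then the set of atoms over the subset {α, τ, ατ} is exactly: { α^[j] · τ^[n−j] · (ατ)^[n−j] : j ∈ [0, n] } ∪ { α^[2j−1] · τ · (ατ) : j ∈ [1, n−1] } ∪ { α^[2j] · τ^[2] : j ∈ [0, n−1] } ∪ { α^[2j] · (ατ)^[2] : j ∈ [0, n−1] }. -/

import Mathlib

namespace ProductOne

open scoped Classical

variable {G : Type*} [Group G]

/-- `S` is a product-one sequence over `G`: its terms can be ordered with product `1`. -/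
def IsProductOne (S : Multiset G) : Prop :=
  ∃ l : List G, (l : Multiset G) = S ∧ l.prod = 1

/-- `S` is an atom (a minimal product-one sequence): it is a nontrivial product-one
sequence that is not the concatenation of two nontrivial product-one sequences. -/
def IsAtomSeq (S : Multiset G) : Prop :=
  S ≠ 0 ∧ IsProductOne S ∧
    ∀ A B : Multiset G, S = A + B → IsProductOne A → IsProductOne B → A = 0 ∨ B = 0

/-- `S` is a sequence over the subset `G₀ ⊆ G`. -/
def SeqOn (G₀ : Set G) (S : Multiset G) : Prop := ∀ g ∈ S, g ∈ G₀

/-- `S` is an atom of the monoid `B(G₀)` of product-one sequences over `G₀`. -/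
def IsAtomSeqOn (G₀ : Set G) (S : Multiset G) : Prop := SeqOn G₀ S ∧ IsAtomSeq S

/-- The set of lengths `L(A)` of factorizations of `A` into atoms over `G₀`. -/
def lengthsOn (G₀ : Set G) (A : Multiset G) : Set ℕ :=
  {k | ∃ f : Multiset (Multiset G), Multiset.card f = k ∧
        (∀ U ∈ f, IsAtomSeqOn G₀ U) ∧ f.sum = A}

/-- The set of lengths `L(A)` over the whole group. -/
def lengths (A : Multiset G) : Set ℕ := lengthsOn Set.univ A

/-- The set of distances of a set `L ⊆ ℕ`. -/
def distancesOf (L : Set ℕ) : Set ℕ :=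
  {d | 0 < d ∧ ∃ a, a ∈ L ∧ a + d ∈ L ∧ ∀ b ∈ L, ¬(a < b ∧ b < a + d)}

/-- The set of distances `Δ(G₀)` of the monoid `B(G₀)`. -/
def DeltaOn (G₀ : Set G) : Set ℕ :=
  {d | ∃ A : Multiset G, SeqOn G₀ A ∧ IsProductOne A ∧ d ∈ distancesOf (lengthsOn G₀ A)}

/-- The set of distances `Δ(G)` of `B(G)`. -/
def Delta (G : Type*) [Group G] : Set ℕ := DeltaOn (Set.univ : Set G)

/-- The large Davenport constant of `G₀`: maximal length of an atom of `B(G₀)`. -/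
noncomputable def DavenportOn (G₀ : Set G) : ℕ :=
  sSup {k | ∃ S : Multiset G, IsAtomSeqOn G₀ S ∧ Multiset.card S = k}

/-- The large Davenport constant `D(G)`. -/
noncomputable def Davenport (G : Type*) [Group G] : ℕ :=
  DavenportOn (Set.univ : Set G)

/-- The small Davenport constant `d(G₀)`: maximal length of a product-one free
sequence over `G₀`. -/
noncomputable def smallDavenportOn (G₀ : Set G) : ℕ :=
  sSup {k | ∃ S : Multiset G, SeqOn G₀ S ∧ Multiset.card S = k ∧
        ∀ T : Multiset G, T ≤ S → T ≠ 0 → ¬IsProductOne T}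

/-- `Δ*(G) = {min Δ(G₀) : G₀ ⊆ G with Δ(G₀) ≠ ∅}`. -/
def DeltaStar (G : Type*) [Group G] : Set ℕ :=
  {d | ∃ G₀ : Set G, (DeltaOn G₀).Nonempty ∧ d = sInf (DeltaOn G₀)}

/-- The elasticity `ρ(L) = max L / min L` of a set of lengths (with the set of
positive elements used, and `ρ = 1` if there are none). -/
noncomputable def elasticity (L : Set ℕ) : ℚ :=
  if (L ∩ {k | 0 < k}).Nonempty then
    ((sSup (L ∩ {k | 0 < k}) : ℕ) : ℚ) / ((sInf (L ∩ {k | 0 < k}) : ℕ) : ℚ)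
  else 1

/-- The elasticity `ρ(G₀)` of the monoid `B(G₀)`. -/
noncomputable def rhoOn (G₀ : Set G) : ℝ :=
  sSup {x : ℝ | ∃ A : Multiset G, SeqOn G₀ A ∧ IsProductOne A ∧
    x = (elasticity (lengthsOn G₀ A) : ℝ)}

/-- `Δ*_ρ(G) = {min Δ(G₀) : G₀ ⊆ G with ρ(G₀) = D(G)/2}`. -/
noncomputable def DeltaRhoStar (G : Type*) [Group G] : Set ℕ :=
  {d | ∃ G₀ : Set G, rhoOn G₀ = (Davenport G : ℝ) / 2 ∧ d = sInf (DeltaOn G₀)}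

/-- Divisibility in the monoid `B(G)`. -/
def BDvd (A S : Multiset G) : Prop :=
  ∃ C : Multiset G, IsProductOne C ∧ S = A + C

/-- The `ω`-invariant `ω(B(G), A)`. -/
noncomputable def omegaAt (A : Multiset G) : ℕ∞ :=
  sInf {N : ℕ∞ | ∀ f : Multiset (Multiset G),
    (∀ B ∈ f, IsProductOne B) → BDvd A f.sum →
    ∃ t ≤ f, (Multiset.card t : ℕ∞) ≤ N ∧ BDvd A t.sum}

/-- `ω(G) = sup {ω(B(G), U) : U an atom of B(G)}`. -/
noncomputable def omegaInv (G : Type*) [Group G] : ℕ∞ :=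
  ⨆ U ∈ {U : Multiset G | IsAtomSeq U}, omegaAt U

/-- `z` is a factorization of `A` into atoms. -/
def IsFactorization (A : Multiset G) (z : Multiset (Multiset G)) : Prop :=
  (∀ U ∈ z, IsAtomSeq U) ∧ z.sum = A

/-- The distance between two factorizations. -/
noncomputable def factDist (z z' : Multiset (Multiset G)) : ℕ :=
  letI := Classical.decEq (Multiset G)
  max (Multiset.card (z - z')) (Multiset.card (z' - z))

/-- The catenary degree `c(A)`. -/
noncomputable def catenaryAt (A : Multiset G) : ℕ∞ :=
  sInf {N : ℕ∞ | ∀ z z' : Multiset (Multiset G),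
    IsFactorization A z → IsFactorization A z' →
    Relation.ReflTransGen
      (fun x y => IsFactorization A y ∧ (factDist x y : ℕ∞) ≤ N) z z'}

/-- The set of positive catenary degrees `Ca(G)`. -/
noncomputable def CatenarySet (G : Type*) [Group G] : Set ℕ∞ :=
  {c | ∃ A : Multiset G, IsProductOne A ∧ catenaryAt A = c ∧ 0 < c}

/-- The catenary degree `c(G)` of `B(G)`. -/
noncomputable def catenaryDegree (G : Type*) [Group G] : ℕ∞ :=
  ⨆ A ∈ {A : Multiset G | IsProductOne A}, catenaryAt A

/-- The cross number `k(S)` of a sequence. -/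
noncomputable def crossNumber (S : Multiset G) : ℚ :=
  (S.map fun g => (1 : ℚ) / (orderOf g : ℚ)).sum

/-- The system of sets of lengths `L(G)`. -/
def LSystem (G : Type*) [Group G] : Set (Set ℕ) :=
  {L | ∃ A : Multiset G, IsProductOne A ∧ L = lengths A}

/-- The set of products `π(S)` of all orderings of the terms of `S`. -/
def piSet (S : Multiset G) : Set G :=
  {g | ∃ l : List G, (l : Multiset G) = S ∧ l.prod = g}

/-- The sumset `{x₁, -x₁} + ⋯ + {x_s, -x_s}` for a sequence `a = x₁ ⋯ x_s`. -/
def signedSums {α : Type*} [AddCommGroup α] (a : Multiset α) : Set α :=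
  {z | ∃ t ≤ a, z = t.sum + t.sum - a.sum}

/-- `Σ_k(T)`: the set of sums of `k`-term subsequences of `T`. -/
def subseqSums {α : Type*} [AddCommMonoid α] (k : ℕ) (T : Multiset α) : Set α :=
  {z | ∃ t ≤ T, Multiset.card t = k ∧ t.sum = z}

/-- The subsequence `S_X` of all terms of `S` lying in `X`. -/
noncomputable def restrictTo (X : Set G) (S : Multiset G) : Multiset G :=
  letI := Classical.decPred fun g => g ∈ X
  S.filter fun g => g ∈ X

/-- The maximum multiplicity `h(S)` of a term of `S`. -/
noncomputable def maxMultiplicity {α : Type*} (S : Multiset α) : ℕ :=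
  letI := Classical.decEq α
  S.toFinset.sup S.count

end ProductOne

namespace AtomsAux
open ProductOne DihedralGroup

variable {n : ℕ}

/-- The multiset with `a` copies of `α`, `b` of `τ`, `c` of `ατ`. -/
def mset (n a b c : ℕ) : Multiset (DihedralGroup n) :=
  Multiset.replicate a (r 1) + Multiset.replicate b (sr 0) + Multiset.replicate c (sr (-1))

/-- The generating set. -/
def G3 (n : ℕ) : Set (DihedralGroup n) := {r 1, sr 0, sr (-1)}

/-- The arithmetic characterization of product-one triples. -/
def P (n a b c : ℕ) : Prop :=
  (b = 0 ∧ c = 0 ∧ n ∣ a) ∨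
  (0 < b + c ∧ (b + c) % 2 = 0 ∧ ((a + c) % 2 = 0 ∨ n ≤ a + min b c))

theorem neg_one_ne_zero' (hn : 3 ≤ n) : (-1 : ZMod n) ≠ 0 := by
  haveI : Fact (1 < n) := ⟨by omega⟩
  simp

theorem mset_add (a b c a' b' c' : ℕ) :
    mset n a b c + mset n a' b' c' = mset n (a + a') (b + b') (c + c') := by
  simp only [mset, Multiset.replicate_add]
  abel

theorem po_add {A B : Multiset (DihedralGroup n)} (hA : IsProductOne A) (hB : IsProductOne B) :
    IsProductOne (A + B) := by
  obtain ⟨l1, hl1, hp1⟩ := hA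
  obtain ⟨l2, hl2, hp2⟩ := hB
  exact ⟨l1 ++ l2, by rw [← Multiset.coe_add, hl1, hl2], by rw [List.prod_append, hp1, hp2, one_mul]⟩

theorem coe_replicate_list (k : ℕ) (g : DihedralGroup n) :
    ((List.replicate k g : List (DihedralGroup n)) : Multiset (DihedralGroup n)) =
      Multiset.replicate k g := Multiset.coe_replicate k g

theorem po_rot {a : ℕ} (h : n ∣ a) : IsProductOne (mset n a 0 0) := by
  refine ⟨List.replicate a (r 1), ?_, ?_⟩
  · simp [mset, Multiset.coe_replicate]
  · rw [List.prod_replicate, r_one_pow, show ((a : ZMod n)) = 0 from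
      (ZMod.natCast_eq_zero_iff a n).mpr h, ← one_def]

theorem mset_congr {a b c a' b' c' : ℕ} (h1 : a = a') (h2 : b = b') (h3 : c = c') :
    mset n a b c = mset n a' b' c' := by rw [h1, h2, h3]

theorem po_tt : IsProductOne (mset n 0 2 0) := by
  refine ⟨List.replicate 2 (sr 0), by rw [Multiset.coe_replicate]; simp [mset], ?_⟩
  show sr 0 * (sr 0 * 1) = 1
  rw [mul_one, sr_mul_self]

theorem po_gg : IsProductOne (mset n 0 0 2) := by
  refine ⟨List.replicate 2 (sr (-1)), by rw [Multiset.coe_replicate]; simp [mset], ?_⟩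
  show sr (-1) * (sr (-1) * 1) = 1
  rw [mul_one, sr_mul_self]

theorem po_pairs (s t : ℕ) : IsProductOne (mset n 0 (2 * s) (2 * t)) := by
  induction s with
  | zero =>
    induction t with
    | zero => exact ⟨[], by simp [mset], rfl⟩
    | succ t ih =>
      have := po_add (n := n) ih po_gg
      rw [mset_add] at this
      rw [mset_congr (a' := 0 + 0) (b' := 2 * 0 + 0) (c' := 2 * t + 2) (by omega) (by omega) (by omega)]
      exact this
  | succ s ih =>
    have := po_add (n := n) ih po_tt
    rw [mset_add] at this
    rw [mset_congr (a' := 0 + 0) (b' := 2 * s + 2) (c' := 2 * t + 0) (by omega) (by omega) (by omega)]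
    exact this

theorem po_a20 {a : ℕ} (h : a % 2 = 0) : IsProductOne (mset n a 2 0) := by
  obtain ⟨p, rfl⟩ : ∃ p, a = p + p := ⟨a / 2, by omega⟩
  refine ⟨List.replicate p (r 1) ++ (sr 0 :: (List.replicate p (r 1) ++ [sr 0])), ?_, ?_⟩
  · rw [← Multiset.coe_add, ← Multiset.cons_coe, ← Multiset.coe_add]
    simp only [Multiset.coe_replicate, mset, Multiset.replicate_add, Multiset.replicate_zero,
      ← Multiset.singleton_add, Multiset.replicate_succ, Multiset.replicate_one]
    abel
  · rw [List.prod_append, List.prod_cons, List.prod_append, List.prod_replicate, r_one_pow]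
    simp only [List.prod_cons, List.prod_nil, mul_one, r_mul_sr, sr_mul_sr, sr_mul_r, r_mul_r]
    rw [one_def]
    congr 1
    ring

theorem po_a02 {a : ℕ} (h : a % 2 = 0) : IsProductOne (mset n a 0 2) := by
  obtain ⟨p, rfl⟩ : ∃ p, a = p + p := ⟨a / 2, by omega⟩
  refine ⟨List.replicate p (r 1) ++ (sr (-1) :: (List.replicate p (r 1) ++ [sr (-1)])), ?_, ?_⟩
  · rw [← Multiset.coe_add, ← Multiset.cons_coe, ← Multiset.coe_add]
    simp only [Multiset.coe_replicate, mset, Multiset.replicate_add, Multiset.replicate_zero,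
      ← Multiset.singleton_add, Multiset.replicate_succ, Multiset.replicate_one]
    abel
  · rw [List.prod_append, List.prod_cons, List.prod_append, List.prod_replicate, r_one_pow]
    simp only [List.prod_cons, List.prod_nil, mul_one, r_mul_sr, sr_mul_sr, sr_mul_r, r_mul_r]
    rw [one_def]
    congr 1
    ring

theorem po_a11 {a : ℕ} (h : a % 2 = 1) : IsProductOne (mset n a 1 1) := by
  obtain ⟨q, rfl⟩ : ∃ q, a = (q + 1) + q := ⟨a / 2, by omega⟩
  refine ⟨List.replicate (q + 1) (r 1) ++ (sr 0 :: (List.replicate q (r 1) ++ [sr (-1)])), ?_, ?_⟩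

  · rw [← Multiset.coe_add, ← Multiset.cons_coe, ← Multiset.coe_add]
    simp only [Multiset.coe_replicate, mset, Multiset.replicate_add, Multiset.replicate_zero,
      ← Multiset.singleton_add, Multiset.replicate_succ, Multiset.replicate_one,
      Multiset.replicate_zero]
    abel
  · rw [List.prod_append, List.prod_cons, List.prod_append, List.prod_replicate,
      List.prod_replicate, r_one_pow, r_one_pow]
    simp only [List.prod_cons, List.prod_nil, mul_one, r_mul_sr, sr_mul_sr, sr_mul_r, r_mul_r]
    rw [one_def]
    congr 1
    push_cast
    ring

/-- The alternating list `[ατ, τ, ατ, τ, …]` with `k` pairs, of product `α^k`. -/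
def chain (n : ℕ) : ℕ → List (DihedralGroup n)
  | 0 => []
  | k + 1 => sr (-1) :: sr 0 :: chain n k

theorem chain_prod (k : ℕ) : (chain n k).prod = r (k : ZMod n) := by
  induction k with
  | zero => simp [chain]
  | succ k ih =>
    rw [chain, List.prod_cons, List.prod_cons, ih, sr_mul_r, sr_mul_sr]
    congr 1
    push_cast
    ring

theorem chain_coe (k : ℕ) : ((chain n k : List (DihedralGroup n)) : Multiset (DihedralGroup n)) =
    Multiset.replicate k (sr 0) + Multiset.replicate k (sr (-1)) := by
  induction k with
  | zero => simp [chain]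
  | succ k ih =>
    rw [chain, ← Multiset.cons_coe, ← Multiset.cons_coe, ih]
    simp only [Multiset.replicate_succ]
    rw [← Multiset.singleton_add, ← Multiset.singleton_add, ← Multiset.singleton_add,
      ← Multiset.singleton_add]
    abel

theorem po_core1 {j : ℕ} (h : j ≤ n) : IsProductOne (mset n j (n - j) (n - j)) := by
  refine ⟨List.replicate j (r 1) ++ chain n (n - j), ?_, ?_⟩
  · rw [← Multiset.coe_add, Multiset.coe_replicate, chain_coe, mset]
    abel
  · rw [List.prod_append, List.prod_replicate, r_one_pow, chain_prod, r_mul_r, one_def]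
    congr 1
    rw [← Nat.cast_add, show j + (n - j) = n from by omega, ZMod.natCast_self]

theorem po_even {a b c : ℕ} (hpos : 0 < b + c) (hbc : (b + c) % 2 = 0) (hac : (a + c) % 2 = 0) :
    IsProductOne (mset n a b c) := by
  rcases Nat.even_or_odd c with hc' | hc'
  · have hc : c % 2 = 0 := Nat.even_iff.mp hc'
    -- c even, so a and b even
    rcases Nat.eq_zero_or_pos b with hb | hb
    · -- b = 0, c ≥ 2
      have := po_add (n := n) (po_a02 (a := a) (by omega)) (po_pairs 0 ((c - 2) / 2))
      rw [mset_add] at this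
      rw [mset_congr (a' := a + 0) (b' := 0 + 2 * 0) (c' := 2 + 2 * ((c - 2) / 2))
        (by omega) (by omega) (by omega)]
      exact this
    · -- b ≥ 2
      have := po_add (n := n) (po_a20 (a := a) (by omega)) (po_pairs ((b - 2) / 2) (c / 2))
      rw [mset_add] at this
      rw [mset_congr (a' := a + 0) (b' := 2 + 2 * ((b - 2) / 2)) (c' := 0 + 2 * (c / 2))
        (by omega) (by omega) (by omega)]
      exact this
  · have hc : c % 2 = 1 := Nat.odd_iff.mp hc'
    -- c odd, so a and b odd
    have := po_add (n := n) (po_a11 (a := a) (by omega)) (po_pairs ((b - 1) / 2) ((c - 1) / 2))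
    rw [mset_add] at this
    rw [mset_congr (a' := a + 0) (b' := 1 + 2 * ((b - 1) / 2)) (c' := 1 + 2 * ((c - 1) / 2))
      (by omega) (by omega) (by omega)]
    exact this

theorem po_suff (hn : 3 ≤ n) (hodd : n % 2 = 1) {a b c : ℕ} (hP : P n a b c) :
    IsProductOne (mset n a b c) := by
  rcases hP with ⟨hb, hc, hdvd⟩ | ⟨hpos, hbc, hor⟩
  · subst hb; subst hc; exact po_rot hdvd
  · rcases Nat.even_or_odd (a + c) with hac | hac
    · exact po_even hpos hbc (Nat.even_iff.mp hac)
    · have hac' : (a + c) % 2 = 1 := Nat.odd_iff.mp hac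
      rcases hor with h | h
      · omega
      · rcases le_or_gt n a with ha | ha
        · -- peel off α^n
          have h2 := po_add (n := n) (po_rot dvd_rfl) (po_even (a := a - n) (b := b) (c := c)
            hpos hbc (by omega))
          rw [mset_add] at h2
          rw [mset_congr (a' := n + (a - n)) (b' := 0 + b) (c' := 0 + c)
            (by omega) (by omega) (by omega)]
          exact h2
        · -- a < n : peel off the core (a, n-a, n-a)
          have hb' : n - a ≤ b := by omega
          have hc' : n - a ≤ c := by omega
          have h2 := po_add (n := n) (po_core1 (j := a) (by omega))
            (po_pairs ((b - (n - a)) / 2) ((c - (n - a)) / 2))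
          rw [mset_add] at h2
          rw [mset_congr (a' := a + 0) (b' := (n - a) + 2 * ((b - (n - a)) / 2))
            (c' := (n - a) + 2 * ((c - (n - a)) / 2)) (by omega) (by omega) (by omega)]
          exact h2

/-- One step of the state machine computing the normal form of a product. -/
def step (n : ℕ) (g : DihedralGroup n) : Bool × ℤ × ℤ → Bool × ℤ × ℤ :=
  fun s =>
    if g = r 1 then (s.1, s.2.1 + (if s.1 then -1 else 1), s.2.2)
    else if g = sr 0 then (!s.1, s.2.1, s.2.2)
    else (!s.1, s.2.1, s.2.2 - (if s.1 then -1 else 1))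

/-- The state after processing a whole list (from the right). -/
def st (n : ℕ) (l : List (DihedralGroup n)) : Bool × ℤ × ℤ := l.foldr (step n) (false, 0, 0)

theorem st_cons (g : DihedralGroup n) (l : List (DihedralGroup n)) :
    st n (g :: l) = step n g (st n l) := rfl

theorem mem_G3_iff {g : DihedralGroup n} : g ∈ G3 n ↔ g = r 1 ∨ g = sr 0 ∨ g = sr (-1) := by
  simp [G3]

theorem ne12 : (r 1 : DihedralGroup n) ≠ sr 0 := by simp
theorem ne13 : (r 1 : DihedralGroup n) ≠ sr (-1) := by simp
theorem ne21 : (sr 0 : DihedralGroup n) ≠ r 1 := by simp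
theorem ne31 : (sr (-1) : DihedralGroup n) ≠ r 1 := by simp
theorem ne23 (hn : 3 ≤ n) : (sr 0 : DihedralGroup n) ≠ sr (-1) := by
  simp only [ne_eq, sr.injEq]
  intro h
  exact neg_one_ne_zero' hn h.symm
theorem ne32 (hn : 3 ≤ n) : (sr (-1) : DihedralGroup n) ≠ sr 0 := (ne23 hn).symm

theorem st_cons_r (l : List (DihedralGroup n)) :
    st n (r 1 :: l) = ((st n l).1, (st n l).2.1 + (if (st n l).1 then -1 else 1),
      (st n l).2.2) := by
  rw [st_cons, step, if_pos rfl]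

theorem st_cons_s0 (l : List (DihedralGroup n)) :
    st n (sr 0 :: l) = (!(st n l).1, (st n l).2.1, (st n l).2.2) := by
  rw [st_cons, step, if_neg ne21, if_pos rfl]

theorem st_cons_s1 (hn : 3 ≤ n) (l : List (DihedralGroup n)) :
    st n (sr (-1) :: l) = (!(st n l).1, (st n l).2.1,
      (st n l).2.2 - (if (st n l).1 then -1 else 1)) := by
  rw [st_cons, step, if_neg ne31, if_neg (ne32 hn)]

theorem st_prod (hn : 3 ≤ n) : ∀ l : List (DihedralGroup n), (∀ g ∈ l, g ∈ G3 n) →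
    l.prod = if (st n l).1 then sr (((st n l).2.1 + (st n l).2.2 : ℤ) : ZMod n)
      else r (((st n l).2.1 + (st n l).2.2 : ℤ) : ZMod n) := by
  intro l hl
  induction l with
  | nil => simp [st]
  | cons g l ih =>
    have hg := mem_G3_iff.mp (hl g List.mem_cons_self)
    have ih' := ih (fun x hx => hl x (List.mem_cons_of_mem g hx))
    rw [List.prod_cons, ih']
    rcases hg with hg | hg | hg <;> subst hg
    · rw [st_cons_r]
      cases h0 : (st n l).1 <;>
        simp only [h0, if_true, if_false, Bool.false_eq_true, Bool.not_true, Bool.not_false,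
          eq_self_iff_true, ite_true, ite_false]
      · rw [r_mul_r]
        congr 1
        push_cast
        ring
      · rw [r_mul_sr]
        congr 1
        push_cast
        ring
    · rw [st_cons_s0]
      cases h0 : (st n l).1 <;>
        simp only [h0, if_true, if_false, Bool.false_eq_true, Bool.not_true, Bool.not_false,
          eq_self_iff_true, ite_true, ite_false]
      · rw [sr_mul_r]
        congr 1
        push_cast
        ring
      · rw [sr_mul_sr]
        congr 1
        push_cast
        ring
    · rw [st_cons_s1 hn]
      cases h0 : (st n l).1 <;>
        simp only [h0, if_true, if_false, Bool.false_eq_true, Bool.not_true, Bool.not_false,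
          eq_self_iff_true, ite_true, ite_false]
      · rw [sr_mul_r]
        congr 1
        push_cast
        ring
      · rw [sr_mul_sr]
        congr 1
        push_cast
        ring

theorem st_inv (hn : 3 ≤ n) : ∀ l : List (DihedralGroup n), (∀ g ∈ l, g ∈ G3 n) →
    (if (st n l).1 then (1 : ℤ) else 0) =
        ((l.count (sr 0) : ℤ) + (l.count (sr (-1)) : ℤ)) % 2 ∧
    (st n l).2.1 % 2 = (l.count (r 1) : ℤ) % 2 ∧
    (st n l).2.1 ≤ (l.count (r 1) : ℤ) ∧ -(st n l).2.1 ≤ (l.count (r 1) : ℤ) ∧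
    (st n l).2.2 % 2 = (l.count (sr (-1)) : ℤ) % 2 ∧
    (st n l).2.2 ≤ (l.count (sr (-1)) : ℤ) ∧ -(st n l).2.2 ≤ (l.count (sr (-1)) : ℤ) ∧
    (st n l).2.2 ≤ (l.count (sr 0) : ℤ) - (if (st n l).1 then 1 else 0) ∧
    -(st n l).2.2 ≤ (l.count (sr 0) : ℤ) + (if (st n l).1 then 1 else 0) ∧
    (l.count (sr 0) = 0 → l.count (sr (-1)) = 0 → (st n l).2.1 = (l.count (r 1) : ℤ)) := by
  intro l hl
  induction l with
  | nil => simp [st]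
  | cons g l ih =>
    have hg := mem_G3_iff.mp (hl g List.mem_cons_self)
    have ih' := ih (fun x hx => hl x (List.mem_cons_of_mem g hx))
    rcases hg with hg | hg | hg <;> subst hg
    · rw [st_cons_r]
      simp only [List.count_cons, beq_iff_eq, ne12, ne13, ne21, ne31, if_true, if_false,
        eq_self_iff_true, ite_true, ite_false]
      cases h0 : (st n l).1 <;>
        simp only [h0, Bool.false_eq_true, Bool.not_true, Bool.not_false, eq_self_iff_true,
          if_true, if_false, ite_true, ite_false] at ih' ⊢ <;>
        push_cast at ih' ⊢ <;> omega
    · rw [st_cons_s0]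
      simp only [List.count_cons, beq_iff_eq, ne12, ne13, ne21, ne31, ne23 hn, ne32 hn, if_true,
        if_false, eq_self_iff_true, ite_true, ite_false]
      cases h0 : (st n l).1 <;>
        simp only [h0, Bool.false_eq_true, Bool.not_true, Bool.not_false, eq_self_iff_true,
          if_true, if_false, ite_true, ite_false] at ih' ⊢ <;>
        push_cast at ih' ⊢ <;>
        exact ⟨by omega, by omega, by omega, by omega, by omega, by omega, by omega, by omega,
          by omega, fun h => h.elim⟩
    · rw [st_cons_s1 hn]
      simp only [List.count_cons, beq_iff_eq, ne12, ne13, ne21, ne31, ne23 hn, ne32 hn, if_true,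
        if_false, eq_self_iff_true, ite_true, ite_false]
      cases h0 : (st n l).1 <;>
        simp only [h0, Bool.false_eq_true, Bool.not_true, Bool.not_false, eq_self_iff_true,
          if_true, if_false, ite_true, ite_false] at ih' ⊢ <;>
        push_cast at ih' ⊢ <;>
        exact ⟨by omega, by omega, by omega, by omega, by omega, by omega, by omega, by omega,
          by omega, fun _ h => h.elim⟩

theorem count_mset_r (hn : 3 ≤ n) (a b c : ℕ) : (mset n a b c).count (r 1) = a := by
  simp [mset, Multiset.count_replicate, ne12.symm, ne13.symm, (ne21 (n := n)), (ne31 (n := n))]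

theorem count_mset_s0 (hn : 3 ≤ n) (a b c : ℕ) : (mset n a b c).count (sr 0) = b := by
  simp [mset, Multiset.count_replicate, (ne12 (n := n)), (ne32 hn), (ne23 hn)]

theorem count_mset_s1 (hn : 3 ≤ n) (a b c : ℕ) : (mset n a b c).count (sr (-1)) = c := by
  simp [mset, Multiset.count_replicate, (ne13 (n := n)), (ne23 hn)]

theorem mem_mset {g : DihedralGroup n} {a b c : ℕ} (h : g ∈ mset n a b c) : g ∈ G3 n := by
  rw [mem_G3_iff]
  simp only [mset, Multiset.mem_add] at h
  rcases h with (h | h) | h <;> [left; right;right] <;>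
    [skip; left; right] <;> exact Multiset.eq_of_mem_replicate h

theorem seqOn_mset (a b c : ℕ) : SeqOn (G3 n) (mset n a b c) := fun _ hg => mem_mset hg

theorem seqOn_eq (hn : 3 ≤ n) {S : Multiset (DihedralGroup n)} (h : SeqOn (G3 n) S) :
    S = mset n (S.count (r 1)) (S.count (sr 0)) (S.count (sr (-1))) := by
  ext g
  by_cases h1 : g = r 1
  · subst h1; rw [count_mset_r hn]
  · by_cases h2 : g = sr 0
    · subst h2; rw [count_mset_s0 hn]
    · by_cases h3 : g = sr (-1)
      · subst h3; rw [count_mset_s1 hn]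
      · rw [Multiset.count_eq_zero.mpr, Multiset.count_eq_zero.mpr]
        · intro hg
          rcases mem_G3_iff.mp (mem_mset hg) with h' | h' | h' <;> tauto
        · intro hg
          rcases mem_G3_iff.mp (h g hg) with h' | h' | h' <;> tauto

theorem po_nec (hn : 3 ≤ n) {a b c : ℕ} (h : IsProductOne (mset n a b c)) : P n a b c := by
  obtain ⟨l, hl, hp⟩ := h
  have hmem : ∀ g ∈ l, g ∈ G3 n := by
    intro g hg
    exact mem_mset (hl ▸ (Multiset.mem_coe.mpr hg) : g ∈ mset n a b c)
  have hca : l.count (r 1) = a := by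
    rw [← Multiset.coe_count, hl, count_mset_r hn]
  have hcb : l.count (sr 0) = b := by
    rw [← Multiset.coe_count, hl, count_mset_s0 hn]
  have hcc : l.count (sr (-1)) = c := by
    rw [← Multiset.coe_count, hl, count_mset_s1 hn]
  have hprod := st_prod hn l hmem
  have hinv := st_inv hn l hmem
  rw [hca, hcb, hcc] at hinv
  rw [hp] at hprod
  cases h0 : (st n l).1 with
  | true =>
    rw [h0, if_pos rfl, one_def] at hprod
    exact absurd hprod (by intro h; cases h)
  | false =>
    rw [h0] at hprod hinv
    simp only [Bool.false_eq_true, if_false, ite_false, one_def] at hprod hinv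
    have hdvd : (n : ℤ) ∣ ((st n l).2.1 + (st n l).2.2) := by
      have : (((st n l).2.1 + (st n l).2.2 : ℤ) : ZMod n) = 0 := by
        exact_mod_cast ((r.injEq _ _).mp hprod).symm
      rwa [ZMod.intCast_zmod_eq_zero_iff_dvd] at this
    obtain ⟨i1, i2, i3, i4, i5, i6, i7, i8, i9, i10⟩ := hinv
    by_cases hbc : b + c = 0
    · left
      refine ⟨by omega, by omega, ?_⟩
      have hu := i10 (by omega) (by omega)
      have heq : ((st n l).2.1 + (st n l).2.2 : ℤ) = (a : ℤ) := by omega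
      rw [heq] at hdvd
      exact Int.natCast_dvd_natCast.mp hdvd
    · right
      refine ⟨by omega, by omega, ?_⟩
      by_cases hac : (a + c) % 2 = 0
      · exact Or.inl hac
      · refine Or.inr ?_
        rcases lt_trichotomy ((st n l).2.1 + (st n l).2.2 : ℤ) 0 with hx | hx | hx
        · have := Int.le_of_dvd (by omega) (dvd_neg.mpr hdvd)
          omega
        · omega
        · have := Int.le_of_dvd hx hdvd
          omega

theorem po_iff (hn : 3 ≤ n) (hodd : n % 2 = 1) (a b c : ℕ) :
    IsProductOne (mset n a b c) ↔ P n a b c :=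
  ⟨po_nec hn, po_suff hn hodd⟩

theorem mset_eq_zero (hn : 3 ≤ n) {a b c : ℕ} :
    mset n a b c = 0 ↔ a = 0 ∧ b = 0 ∧ c = 0 := by
  constructor
  · intro h
    refine ⟨?_, ?_, ?_⟩
    · rw [← count_mset_r hn a b c, h, Multiset.count_zero]
    · rw [← count_mset_s0 hn a b c, h, Multiset.count_zero]
    · rw [← count_mset_s1 hn a b c, h, Multiset.count_zero]
  · rintro ⟨rfl, rfl, rfl⟩
    simp [mset]

theorem parity_of_P {a b c : ℕ} (h : P n a b c) : (b + c) % 2 = 0 := by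
  rcases h with ⟨h1, h2, _⟩ | ⟨_, h2, _⟩ <;> omega

theorem dvd_cases {m : ℕ} (hn : 3 ≤ n) (h : n ∣ m) : m = 0 ∨ m = n ∨ 2 * n ≤ m := by
  obtain ⟨k, rfl⟩ := h
  match k with
  | 0 => left; omega
  | 1 => right; left; omega
  | (k + 2) =>
    right; right
    calc 2 * n = n * 2 := by ring
    _ ≤ n * (k + 2) := Nat.mul_le_mul_left n (by omega)

/-- An arithmetic criterion implying atomicity. -/
theorem atom_of_P (hn : 3 ≤ n) (hodd : n % 2 = 1) {a b c : ℕ} (hP : P n a b c)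
    (h0 : a + b + c ≠ 0)
    (H : ∀ a₁ b₁ c₁ a₂ b₂ c₂ : ℕ, a₁ + a₂ = a → b₁ + b₂ = b → c₁ + c₂ = c →
      P n a₁ b₁ c₁ → P n a₂ b₂ c₂ → (a₁ + b₁ + c₁ = 0 ∨ a₂ + b₂ + c₂ = 0)) :
    IsAtomSeqOn (G3 n) (mset n a b c) := by
  refine ⟨seqOn_mset a b c, ?_, po_suff hn hodd hP, ?_⟩
  · intro h
    obtain ⟨h1, h2, h3⟩ := (mset_eq_zero hn).mp h
    omega
  · intro A B heq hA hB
    have hseqA : SeqOn (G3 n) A := by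
      intro g hg
      exact mem_mset (a := a) (b := b) (c := c) (heq ▸ Multiset.mem_add.mpr (Or.inl hg))
    have hseqB : SeqOn (G3 n) B := by
      intro g hg
      exact mem_mset (a := a) (b := b) (c := c) (heq ▸ Multiset.mem_add.mpr (Or.inr hg))
    have hA' := seqOn_eq hn hseqA
    have hB' := seqOn_eq hn hseqB
    have hsa : A.count (r 1) + B.count (r 1) = a := by
      rw [← Multiset.count_add, ← heq, count_mset_r hn]
    have hsb : A.count (sr 0) + B.count (sr 0) = b := by
      rw [← Multiset.count_add, ← heq, count_mset_s0 hn]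
    have hsc : A.count (sr (-1)) + B.count (sr (-1)) = c := by
      rw [← Multiset.count_add, ← heq, count_mset_s1 hn]
    rw [hA'] at hA
    rw [hB'] at hB
    have hPA := po_nec hn hA
    have hPB := po_nec hn hB
    rcases H _ _ _ _ _ _ hsa hsb hsc hPA hPB with h | h
    · left
      rw [hA' ]
      exact (mset_eq_zero hn).mpr ⟨by omega, by omega, by omega⟩
    · right
      rw [hB']
      exact (mset_eq_zero hn).mpr ⟨by omega, by omega, by omega⟩

theorem atom_F1 (hn : 3 ≤ n) (hodd : n % 2 = 1) {a : ℕ} (ha : a ≤ n) :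
    IsAtomSeqOn (G3 n) (mset n a (n - a) (n - a)) := by
  have hP : P n a (n - a) (n - a) := by
    rcases eq_or_lt_of_le ha with rfl | hlt
    · left; exact ⟨by omega, by omega, dvd_refl _⟩
    · right
      exact ⟨by omega, by omega, Or.inr (by omega)⟩
  refine atom_of_P hn hodd hP (by omega) ?_
  intro a₁ b₁ c₁ a₂ b₂ c₂ hsa hsb hsc hP1 hP2
  rcases eq_or_lt_of_le ha with rfl | hlt
  · -- a = n, so b = c = 0
    rcases hP1 with ⟨_, _, hd1⟩ | ⟨hpos, _, _⟩
    · rcases hP2 with ⟨_, _, hd2⟩ | ⟨hpos, _, _⟩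
      · rcases dvd_cases hn hd1 with h | h | h <;> rcases dvd_cases hn hd2 with h' | h' | h' <;>
          omega
      · omega
    · omega
  · -- a < n
    have main : ∀ x₁ y₁ z₁ x₂ y₂ z₂ : ℕ, x₁ + x₂ = a → y₁ + y₂ = n - a → z₁ + z₂ = n - a →
        P n x₁ y₁ z₁ → (x₁ + z₁) % 2 = 1 → x₂ + y₂ + z₂ = 0 := by
      intro x₁ y₁ z₁ x₂ y₂ z₂ hx hy hz hP hparity
      rcases hP with ⟨hy0, hz0, hd⟩ | ⟨hpos, hpar, hor⟩
      · have hx1 : x₁ ≠ 0 := by omega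
        have := Nat.le_of_dvd (by omega) hd
        omega
      · rcases hor with h | h
        · omega
        · omega
    have hodd' : ((a₁ + c₁) + (a₂ + c₂)) % 2 = 1 := by omega
    by_cases h1 : (a₁ + c₁) % 2 = 1
    · right; exact main a₁ b₁ c₁ a₂ b₂ c₂ hsa hsb hsc hP1 h1
    · left; exact main a₂ b₂ c₂ a₁ b₁ c₁ (by omega) (by omega) (by omega) hP2 (by omega)

theorem atom_F2 (hn : 3 ≤ n) (hodd : n % 2 = 1) {a : ℕ} (ha1 : a % 2 = 1)
    (ha2 : a ≤ 2 * n - 3) : IsAtomSeqOn (G3 n) (mset n a 1 1) := by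
  have hP : P n a 1 1 := Or.inr ⟨by omega, by omega, Or.inl (by omega)⟩
  refine atom_of_P hn hodd hP (by omega) ?_
  intro a₁ b₁ c₁ a₂ b₂ c₂ hsa hsb hsc hP1 hP2
  have he1 := parity_of_P hP1
  have he2 := parity_of_P hP2
  have main : ∀ x₁ y₁ z₁ x₂ y₂ z₂ : ℕ, x₁ + x₂ = a → y₁ + y₂ = 1 → z₁ + z₂ = 1 →
      y₁ = 0 → z₁ = 0 → P n x₁ y₁ z₁ → P n x₂ y₂ z₂ → x₁ = 0 := by
    intro x₁ y₁ z₁ x₂ y₂ z₂ hx hy hz hy1 hz1 hQ1 hQ2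
    rcases hQ1 with ⟨_, _, hd⟩ | ⟨hpos, _, _⟩
    · rcases dvd_cases hn hd with h | h | h
      · exact h
      · exfalso
        rcases hQ2 with ⟨hy2, _, _⟩ | ⟨_, _, hor⟩
        · omega
        · rcases hor with h' | h' <;> omega
      · omega
    · omega
  by_cases hb1 : b₁ = 0
  · left
    have := main a₁ b₁ c₁ a₂ b₂ c₂ hsa hsb hsc hb1 (by omega) hP1 hP2
    omega
  · right
    have := main a₂ b₂ c₂ a₁ b₁ c₁ (by omega) (by omega) (by omega) (by omega) (by omega) hP2 hP1
    omega

theorem atom_F3 (hn : 3 ≤ n) (hodd : n % 2 = 1) {a : ℕ} (ha1 : a % 2 = 0)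
    (ha2 : a ≤ 2 * n - 2) : IsAtomSeqOn (G3 n) (mset n a 2 0) := by
  have hP : P n a 2 0 := Or.inr ⟨by omega, by omega, Or.inl (by omega)⟩
  refine atom_of_P hn hodd hP (by omega) ?_
  intro a₁ b₁ c₁ a₂ b₂ c₂ hsa hsb hsc hP1 hP2
  have he1 := parity_of_P hP1
  have he2 := parity_of_P hP2
  have main : ∀ x₁ y₁ z₁ x₂ y₂ z₂ : ℕ, x₁ + x₂ = a → y₁ + y₂ = 2 → z₁ + z₂ = 0 →
      y₁ = 0 → P n x₁ y₁ z₁ → P n x₂ y₂ z₂ → x₁ = 0 := by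
    intro x₁ y₁ z₁ x₂ y₂ z₂ hx hy hz hy1 hQ1 hQ2
    rcases hQ1 with ⟨_, _, hd⟩ | ⟨hpos, _, _⟩
    · rcases dvd_cases hn hd with h | h | h
      · exact h
      · exfalso
        rcases hQ2 with ⟨hy2, _, _⟩ | ⟨_, _, hor⟩
        · omega
        · rcases hor with h' | h' <;> omega
      · omega
    · omega
  by_cases hb1 : b₁ = 0
  · left
    have := main a₁ b₁ c₁ a₂ b₂ c₂ hsa hsb hsc hb1 hP1 hP2
    omega
  · right
    have := main a₂ b₂ c₂ a₁ b₁ c₁ (by omega) (by omega) (by omega) (by omega) hP2 hP1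
    omega

theorem atom_F4 (hn : 3 ≤ n) (hodd : n % 2 = 1) {a : ℕ} (ha1 : a % 2 = 0)
    (ha2 : a ≤ 2 * n - 2) : IsAtomSeqOn (G3 n) (mset n a 0 2) := by
  have hP : P n a 0 2 := Or.inr ⟨by omega, by omega, Or.inl (by omega)⟩
  refine atom_of_P hn hodd hP (by omega) ?_
  intro a₁ b₁ c₁ a₂ b₂ c₂ hsa hsb hsc hP1 hP2
  have he1 := parity_of_P hP1
  have he2 := parity_of_P hP2
  have main : ∀ x₁ y₁ z₁ x₂ y₂ z₂ : ℕ, x₁ + x₂ = a → y₁ + y₂ = 0 → z₁ + z₂ = 2 →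
      z₁ = 0 → P n x₁ y₁ z₁ → P n x₂ y₂ z₂ → x₁ = 0 := by
    intro x₁ y₁ z₁ x₂ y₂ z₂ hx hy hz hz1 hQ1 hQ2
    rcases hQ1 with ⟨_, _, hd⟩ | ⟨hpos, _, _⟩
    · rcases dvd_cases hn hd with h | h | h
      · exact h
      · exfalso
        rcases hQ2 with ⟨_, hz2, _⟩ | ⟨_, _, hor⟩
        · omega
        · rcases hor with h' | h' <;> omega
      · omega
    · omega
  by_cases hc1 : c₁ = 0
  · left
    have := main a₁ b₁ c₁ a₂ b₂ c₂ hsa hsb hsc hc1 hP1 hP2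
    omega
  · right
    have := main a₂ b₂ c₂ a₁ b₁ c₁ (by omega) (by omega) (by omega) (by omega) hP2 hP1
    omega

theorem mset_c0 (x y : ℕ) : mset n x y 0 =
    Multiset.replicate x (r 1) + Multiset.replicate y (sr 0) := by
  simp [mset]

theorem mset_b0 (x z : ℕ) : mset n x 0 z =
    Multiset.replicate x (r 1) + Multiset.replicate z (sr (-1)) := by
  simp [mset]

theorem atom_only (hn : 3 ≤ n) (hodd : n % 2 = 1) {a b c : ℕ}
    (h : IsAtomSeqOn (G3 n) (mset n a b c)) :
    (a ≤ n ∧ b = n - a ∧ c = n - a) ∨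
    (a % 2 = 1 ∧ 1 ≤ a ∧ a ≤ 2 * n - 3 ∧ b = 1 ∧ c = 1) ∨
    (a % 2 = 0 ∧ a ≤ 2 * n - 2 ∧ b = 2 ∧ c = 0) ∨
    (a % 2 = 0 ∧ a ≤ 2 * n - 2 ∧ b = 0 ∧ c = 2) := by
  obtain ⟨hseq, hne0, hpo, hmin⟩ := h
  have hP := po_nec hn hpo
  have hne0' : a + b + c ≠ 0 := fun hz =>
    hne0 ((mset_eq_zero hn).mpr ⟨by omega, by omega, by omega⟩)
  have key : ∀ a₁ b₁ c₁ a₂ b₂ c₂ : ℕ, a₁ + a₂ = a → b₁ + b₂ = b → c₁ + c₂ = c →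
      P n a₁ b₁ c₁ → P n a₂ b₂ c₂ → a₁ + b₁ + c₁ ≠ 0 → a₂ + b₂ + c₂ ≠ 0 → False := by
    intro a₁ b₁ c₁ a₂ b₂ c₂ h1 h2 h3 hp1 hp2 hz1 hz2
    have heq : mset n a b c = mset n a₁ b₁ c₁ + mset n a₂ b₂ c₂ := by
      rw [mset_add]
      exact mset_congr (by omega) (by omega) (by omega)
    rcases hmin _ _ heq (po_suff hn hodd hp1) (po_suff hn hodd hp2) with h | h
    · obtain ⟨e1, e2, e3⟩ := (mset_eq_zero hn).mp h; omega
    · obtain ⟨e1, e2, e3⟩ := (mset_eq_zero hn).mp h; omega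
  rcases hP with ⟨hb0, hc0, hdvd⟩ | ⟨hpos, hpar, hor⟩
  · -- pure rotations
    rcases dvd_cases hn hdvd with h | h | h
    · omega
    · left; omega
    · exfalso
      exact key n 0 0 (a - n) 0 0 (by omega) (by omega) (by omega)
        (Or.inl ⟨rfl, rfl, dvd_refl n⟩)
        (Or.inl ⟨rfl, rfl, (Nat.dvd_sub hdvd (dvd_refl n))⟩) (by omega) (by omega)
  · by_cases hac : (a + c) % 2 = 0
    · by_cases hc2 : c % 2 = 0
      · -- a, b, c all even
        by_cases hbc2 : 2 ≤ b ∧ 2 ≤ c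
        · exact absurd (key 0 2 0 a (b - 2) c (by omega) (by omega) (by omega)
            (Or.inr ⟨by omega, by omega, Or.inl (by omega)⟩)
            (Or.inr ⟨by omega, by omega, Or.inl (by omega)⟩) (by omega) (by omega)) id
        · by_cases hc0 : c = 0
          · -- c = 0, b even positive
            by_cases hb4 : 4 ≤ b
            · exact absurd (key 0 2 0 a (b - 2) 0 (by omega) (by omega) (by omega)
                (Or.inr ⟨by omega, by omega, Or.inl (by omega)⟩)
                (Or.inr ⟨by omega, by omega, Or.inl (by omega)⟩) (by omega) (by omega)) id
            · -- b = 2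
              have hb2 : b = 2 := by omega
              by_cases ha2n : 2 * n ≤ a
              · exact absurd (key (2 * n) 0 0 (a - 2 * n) 2 0 (by omega) (by omega) (by omega)
                  (Or.inl ⟨rfl, rfl, dvd_mul_left n 2⟩)
                  (Or.inr ⟨by omega, by omega, Or.inl (by omega)⟩) (by omega) (by omega)) id
              · right; right; left; omega
          · -- b = 0 (or b small), c even positive
            have hb0 : b = 0 := by omega
            by_cases hc4 : 4 ≤ c
            · exact absurd (key 0 0 2 a 0 (c - 2) (by omega) (by omega) (by omega)
                (Or.inr ⟨by omega, by omega, Or.inl (by omega)⟩)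
                (Or.inr ⟨by omega, by omega, Or.inl (by omega)⟩) (by omega) (by omega)) id
            · have hcc : c = 2 := by omega
              by_cases ha2n : 2 * n ≤ a
              · exact absurd (key (2 * n) 0 0 (a - 2 * n) 0 2 (by omega) (by omega) (by omega)
                  (Or.inl ⟨rfl, rfl, dvd_mul_left n 2⟩)
                  (Or.inr ⟨by omega, by omega, Or.inl (by omega)⟩) (by omega) (by omega)) id
              · right; right; right; omega
      · -- a, b, c all odd
        by_cases h3 : 3 ≤ b ∨ 3 ≤ c
        · exact absurd (key 1 1 1 (a - 1) (b - 1) (c - 1) (by omega) (by omega) (by omega)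
            (Or.inr ⟨by omega, by omega, Or.inl (by omega)⟩)
            (Or.inr ⟨by omega, by omega, Or.inl (by omega)⟩) (by omega) (by omega)) id
        · have hb1 : b = 1 := by omega
          have hc1 : c = 1 := by omega
          by_cases ha3 : 2 * n - 1 ≤ a
          · exact absurd (key n 0 0 (a - n) 1 1 (by omega) (by omega) (by omega)
              (Or.inl ⟨rfl, rfl, dvd_refl n⟩)
              (Or.inr ⟨by omega, by omega, Or.inr (by omega)⟩) (by omega) (by omega)) id
          · right; left; omega
    · -- a + c odd
      have hminbc : n ≤ a + min b c := by
        rcases hor with h | h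
        · omega
        · exact h
      by_cases hc0 : c = 0
      · exact absurd (key n 0 0 (a - n) b 0 (by omega) (by omega) (by omega)
          (Or.inl ⟨rfl, rfl, dvd_refl n⟩)
          (Or.inr ⟨by omega, by omega, Or.inl (by omega)⟩) (by omega) (by omega)) id
      · by_cases hb0 : b = 0
        · exact absurd (key n 0 0 (a - n) 0 c (by omega) (by omega) (by omega)
            (Or.inl ⟨rfl, rfl, dvd_refl n⟩)
            (Or.inr ⟨by omega, by omega, Or.inl (by omega)⟩) (by omega) (by omega)) id
        · -- b, c ≥ 1
          by_cases hbc : b = c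
          · by_cases han : n ≤ a
            · exact absurd (key n 0 0 (a - n) b c (by omega) (by omega) (by omega)
                (Or.inl ⟨rfl, rfl, dvd_refl n⟩)
                (Or.inr ⟨by omega, by omega, Or.inl (by omega)⟩) (by omega) (by omega)) id
            · by_cases hbeq : b = n - a
              · left; omega
              · exact absurd (key a (n - a) (n - a) 0 (b - (n - a)) (c - (n - a))
                  (by omega) (by omega) (by omega)
                  (Or.inr ⟨by omega, by omega, Or.inr (by omega)⟩)
                  (Or.inr ⟨by omega, by omega, Or.inl (by omega)⟩) (by omega) (by omega)) id
          · by_cases hblt : c < b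
            · exact absurd (key 0 2 0 a (b - 2) c (by omega) (by omega) (by omega)
                (Or.inr ⟨by omega, by omega, Or.inl (by omega)⟩)
                (Or.inr ⟨by omega, by omega, Or.inr (by omega)⟩) (by omega) (by omega)) id
            · exact absurd (key 0 0 2 a b (c - 2) (by omega) (by omega) (by omega)
                (Or.inr ⟨by omega, by omega, Or.inl (by omega)⟩)
                (Or.inr ⟨by omega, by omega, Or.inr (by omega)⟩) (by omega) (by omega)) id

end AtomsAux

open ProductOne DihedralGroup in
/-- Let `n ≥ 3` be odd. The atoms of `B({α, τ, ατ})` in the dihedral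
group `D_{2n}` (with `α = r 1`, `τ = sr 0`, `ατ = sr (-1)`) are exactly the listed
sequences. -/
theorem atoms_over_three_elements (n : ℕ) (hn : 3 ≤ n) (hodd : Odd n) :
    {S : Multiset (DihedralGroup n) |
        IsAtomSeqOn {DihedralGroup.r 1, DihedralGroup.sr 0, DihedralGroup.sr (-1)} S} =
      {S | ∃ j : ℕ, j ≤ n ∧ S =
          Multiset.replicate j (DihedralGroup.r 1) +
          Multiset.replicate (n - j) (DihedralGroup.sr 0) +
          Multiset.replicate (n - j) (DihedralGroup.sr (-1))} ∪
      {S | ∃ j : ℕ, 1 ≤ j ∧ j ≤ n - 1 ∧ S =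
          Multiset.replicate (2 * j - 1) (DihedralGroup.r 1) +
          Multiset.replicate 1 (DihedralGroup.sr 0) +
          Multiset.replicate 1 (DihedralGroup.sr (-1))} ∪
      {S | ∃ j : ℕ, j ≤ n - 1 ∧ S =
          Multiset.replicate (2 * j) (DihedralGroup.r 1) +
          Multiset.replicate 2 (DihedralGroup.sr 0)} ∪
      {S | ∃ j : ℕ, j ≤ n - 1 ∧ S =
          Multiset.replicate (2 * j) (DihedralGroup.r 1) +
          Multiset.replicate 2 (DihedralGroup.sr (-1))} := by
  have hodd' : n % 2 = 1 := Nat.odd_iff.mp hodd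
  have hG : ({DihedralGroup.r 1, DihedralGroup.sr 0, DihedralGroup.sr (-1)} :
      Set (DihedralGroup n)) = AtomsAux.G3 n := rfl
  ext S
  simp only [Set.mem_setOf_eq, Set.mem_union]
  constructor
  · intro h
    rw [hG] at h
    obtain ⟨a, b, c, hS⟩ : ∃ a b c, S = AtomsAux.mset n a b c :=
      ⟨_, _, _, AtomsAux.seqOn_eq hn h.1⟩
    rw [hS] at h
    rcases AtomsAux.atom_only hn hodd' h with
      ⟨h1, h2, h3⟩ | ⟨h1, h2, h3, h4, h5⟩ | ⟨h1, h2, h3, h4⟩ | ⟨h1, h2, h3, h4⟩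
    · exact Or.inl (Or.inl (Or.inl ⟨a, h1, by rw [hS, h2, h3]; rfl⟩))
    · refine Or.inl (Or.inl (Or.inr ⟨(a + 1) / 2, by omega, by omega, ?_⟩))
      rw [hS, h4, h5]
      exact AtomsAux.mset_congr (by omega) rfl rfl
    · refine Or.inl (Or.inr ⟨a / 2, by omega, ?_⟩)
      rw [← AtomsAux.mset_c0, hS, h3, h4]
      exact AtomsAux.mset_congr (by omega) rfl rfl
    · refine Or.inr ⟨a / 2, by omega, ?_⟩
      rw [← AtomsAux.mset_b0, hS, h3, h4]
      exact AtomsAux.mset_congr (by omega) rfl rfl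
  · intro h
    rw [hG]
    rcases h with ((⟨j, hj, hS⟩ | ⟨j, hj1, hj2, hS⟩) | ⟨j, hj, hS⟩) | ⟨j, hj, hS⟩
    · rw [hS]
      exact AtomsAux.atom_F1 hn hodd' hj
    · rw [hS]
      exact AtomsAux.atom_F2 hn hodd' (a := 2 * j - 1) (by omega) (by omega)
    · rw [hS, ← AtomsAux.mset_c0]
      exact AtomsAux.atom_F3 hn hodd' (by omega) (by omega)
    · rw [hS, ← AtomsAux.mset_b0]
      exact AtomsAux.atom_F4 hn hodd' (by omega) (by omega)
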